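/- (Converse direction of the point-mass theorem) If for every α ∈ (0,1), q_α(θ) → D_L as θ → θ_L and q_α(θ) → D_U as θ → θ_U, then for every d in the interior of Ω_D, lim_{θ→θ_L} C(θ; d) = 0 and lim_{θ→θ_U} C(θ; d) = 1. -/
import Mathlib


open Set Filter Topology

/-- Converse direction of the point-mass theorem: if for every `α ∈ (0,1)` the
quantile `q α θ` converges to the boundary of the sample space `Ω_D = (Dl, Du)`
as `θ` converges to the corresponding boundary of `Θ = (θl, θu)`, then for
every interior `d`, `C(θ; d) = 1 - F θ d` tends to `0` as `θ → θl⁺` and to `1`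
as `θ → θu⁻`: no point mass. -/
theorem no_point_mass_of_quantile_to_boundary
    (θl θu Dl Du : ℝ) (hΘ : θl < θu) (hΩ : Dl < Du)
    (F : ℝ → ℝ → ℝ) (q : ℝ → ℝ → ℝ)
    (hFmono : ∀ θ ∈ Ioo θl θu, MonotoneOn (F θ) (Ioo Dl Du))
    (hFrange : ∀ θ ∈ Ioo θl θu, ∀ d ∈ Ioo Dl Du, F θ d ∈ Icc (0 : ℝ) 1)
    (hq : ∀ α ∈ Ioo (0 : ℝ) 1, ∀ θ ∈ Ioo θl θu,
      q α θ ∈ Ioo Dl Du ∧ F θ (q α θ) = 1 - α)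
    (hbdry : ∀ α ∈ Ioo (0 : ℝ) 1,
      Tendsto (q α) (𝓝[>] θl) (𝓝 Dl) ∧ Tendsto (q α) (𝓝[<] θu) (𝓝 Du)) :
    ∀ d ∈ Ioo Dl Du,
      Tendsto (fun θ => 1 - F θ d) (𝓝[>] θl) (𝓝 0) ∧
      Tendsto (fun θ => 1 - F θ d) (𝓝[<] θu) (𝓝 1) := by
  intro d hd
  constructor
  · rw [Metric.tendsto_nhds]
    intro ε hε
    set α : ℝ := min (ε/2) (1/2) with hα
    have hαmem : α ∈ Ioo (0:ℝ) 1 := by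
      constructor
      · exact lt_min (by linarith) (by norm_num)
      · exact lt_of_le_of_lt (min_le_right _ _) (by norm_num)
    have h1 : ∀ᶠ θ in 𝓝[>] θl, θ ∈ Ioo θl θu := Ioo_mem_nhdsGT_of_mem ⟨le_refl _, hΘ⟩
    have h2 : ∀ᶠ θ in 𝓝[>] θl, q α θ < d :=
      (hbdry α hαmem).1 (Iio_mem_nhds hd.1)
    filter_upwards [h1, h2] with θ hθ hqd
    have hqmem := (hq α hαmem θ hθ).1
    have hFq := (hq α hαmem θ hθ).2
    have hmono := hFmono θ hθ hqmem hd hqd.le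
    have hr := hFrange θ hθ d hd
    rw [Real.dist_eq, sub_zero]
    have hFd : 1 - α ≤ F θ d := hFq ▸ hmono
    have : α < ε := lt_of_le_of_lt (min_le_left _ _) (by linarith)
    rw [abs_lt]
    constructor <;> linarith [hr.2, hαmem.1]
  · rw [Metric.tendsto_nhds]
    intro ε hε
    set α : ℝ := max (1 - ε/2) (1/2) with hα
    have hαmem : α ∈ Ioo (0:ℝ) 1 := by
      constructor
      · exact lt_of_lt_of_le (by norm_num) (le_max_right _ _)
      · exact max_lt (by linarith) (by norm_num)
    have h1 : ∀ᶠ θ in 𝓝[<] θu, θ ∈ Ioo θl θu := Ioo_mem_nhdsLT_of_mem ⟨hΘ, le_refl _⟩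
    have h2 : ∀ᶠ θ in 𝓝[<] θu, d < q α θ :=
      (hbdry α hαmem).2 (Ioi_mem_nhds hd.2)
    filter_upwards [h1, h2] with θ hθ hqd
    have hqmem := (hq α hαmem θ hθ).1
    have hFq := (hq α hαmem θ hθ).2
    have hmono := hFmono θ hθ hd hqmem hqd.le
    have hr := hFrange θ hθ d hd
    rw [Real.dist_eq]
    have h1α : 1 - α ≤ ε/2 := by
      have := le_max_left (1 - ε/2) (1/2); linarith [le_max_left (1 - ε/2) (1/2)]
    have hFd : F θ d ≤ 1 - α := hFq ▸ hmono
    rw [abs_lt]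
    constructor <;> linarith [hr.1]
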